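/- Let D > 0, v ∈ ℝ, t > 0, S > 0, z_TX ∈ ℝ, z_S < z_E be real numbers, and let (x_i, y_i) ∈ ℝ² with r_i² = x_i² + y_i². Then the integral of the Gaussian concentration C(x,y,z) = (4πDt)^{-3/2} · exp(-((x - x_i)² + (y - y_i)² + (z - z_TX - v·t)²)/(4Dt)) over the cylinder {(x,y,z) : x² + y² ≤ S², z_S ≤ z ≤ z_E} equals (1/2)·(erf((z_TX + v·t - z_S)/√(4Dt)) - erf((z_TX + v·t - z_E)/√(4Dt))) · exp(-r_i²/(4Dt)) · ∑_{k=0}^∞ (r_i²/(4Dt))^k / (k!)² · γ(k+1, S²/(4Dt)). -/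

import Mathlib

open MeasureTheory Real Filter

/-- The Gaussian error function `erf x = (2/√π) ∫₀ˣ exp(-y²) dy`. -/
noncomputable def erf (x : ℝ) : ℝ := (2 / Real.sqrt π) * ∫ y in (0:ℝ)..x, Real.exp (-y^2)

/-- The lower incomplete Gamma function `γ(a, x) = ∫₀ˣ y^(a-1) exp(-y) dy`. -/
noncomputable def lowerGamma (a x : ℝ) : ℝ := ∫ y in (0:ℝ)..x, y^(a-1) * Real.exp (-y)

lemma prod_half : ∀ k : ℕ, (∏ i ∈ Finset.range k, (2*(i:ℝ)+1)/(2*i+2)) = (2*k).factorial / (4^k * (k.factorial)^2) := by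
  intro k
  induction k with
  | zero => simp
  | succ n ih =>
    rw [Finset.prod_range_succ, ih]
    have h1 : (2*(n+1)) = (2*n) + 1 + 1 := by ring
    rw [h1, Nat.factorial_succ, Nat.factorial_succ, Nat.factorial_succ]
    push_cast
    have h2 : ((2*n).factorial : ℝ) ≠ 0 := by positivity
    have h3 : ((n).factorial : ℝ) ≠ 0 := by positivity
    field_simp
    ring

lemma periodic_pow (n : ℕ) : Function.Periodic (fun θ => Real.cos θ ^ n) (2*π) := by
  intro x; simp [Real.cos_add_two_pi]

lemma cos_even_moment (k : ℕ) : (∫ θ in (-π)..π, Real.cos θ ^ (2*k)) = (2*π) * (2*k).factorial / (4^k * (k.factorial)^2) := by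
  have hshift : (∫ θ in (-π)..π, Real.cos θ ^ (2*k)) = ∫ θ in (-π)..π, Real.sin θ ^ (2*k) := by
    have h1 : ∀ θ : ℝ, Real.sin θ ^ (2*k) = Real.cos (θ - π/2) ^ (2*k) := by
      intro θ; rw [Real.cos_sub_pi_div_two]
    simp_rw [h1]
    rw [intervalIntegral.integral_comp_sub_right (fun θ => Real.cos θ ^ (2*k)) (π/2)]
    have := (periodic_pow (2*k)).intervalIntegral_add_eq (-π - π/2) (-π)
    have e1 : -π - π/2 + 2*π = π - π/2 := by ring
    have e2 : -π + 2*π = π := by ring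
    rw [e1, e2] at this
    rw [this]
  have hsin2 : (∫ θ in (-π)..π, Real.sin θ ^ (2*k)) = 2 * ∫ θ in (0:ℝ)..π, Real.sin θ ^ (2*k) := by
    have hsplit : (∫ θ in (-π)..π, Real.sin θ ^ (2*k)) = (∫ θ in (-π)..(0:ℝ), Real.sin θ ^ (2*k)) + ∫ θ in (0:ℝ)..π, Real.sin θ ^ (2*k) := by
      rw [intervalIntegral.integral_add_adjacent_intervals] <;>
        exact ((Real.continuous_sin).pow _).intervalIntegrable _ _
    have heven : (∫ θ in (-π)..(0:ℝ), Real.sin θ ^ (2*k)) = ∫ θ in (0:ℝ)..π, Real.sin θ ^ (2*k) := by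
      have h := intervalIntegral.integral_comp_neg (a := (0:ℝ)) (b := π) (fun θ => Real.sin θ ^ (2*k))
      simp only [Real.sin_neg, neg_pow, Even.neg_pow (even_two_mul k)] at h
      rw [h]; norm_num
    rw [hsplit, heven]; ring
  rw [hshift, hsin2, integral_sin_pow_even, prod_half]
  ring

lemma periodic_lin (A B : ℝ) (n : ℕ) : Function.Periodic (fun θ => (A * Real.cos θ + B * Real.sin θ) ^ n) (2*π) := by
  intro x; simp [Real.cos_add_two_pi, Real.sin_add_two_pi]

lemma odd_moment (A B : ℝ) (k : ℕ) :
    (∫ θ in (-π)..π, (A * Real.cos θ + B * Real.sin θ) ^ (2*k+1)) = 0 := by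
  set f : ℝ → ℝ := fun θ => (A * Real.cos θ + B * Real.sin θ) ^ (2*k+1) with hf
  have hneg : ∀ θ, f (θ + π) = - f θ := by
    intro θ
    simp only [hf, Real.cos_add_pi, Real.sin_add_pi]
    rw [show A * -Real.cos θ + B * -Real.sin θ = -(A * Real.cos θ + B * Real.sin θ) by ring,
      Odd.neg_pow ⟨k, by ring⟩]
  have h1 : (∫ θ in (-π)..π, f (θ + π)) = ∫ θ in (0:ℝ)..2*π, f θ := by
    rw [intervalIntegral.integral_comp_add_right f π, show -π + π = (0:ℝ) by ring, show π + π = 2*π by ring]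
  have h2 : (∫ θ in (0:ℝ)..2*π, f θ) = ∫ θ in (-π)..π, f θ := by
    have := (periodic_lin A B (2*k+1)).intervalIntegral_add_eq 0 (-π)
    rw [zero_add, show -π + 2*π = π by ring] at this
    exact this
  have h3 : (∫ θ in (-π)..π, f (θ + π)) = -∫ θ in (-π)..π, f θ := by
    simp_rw [hneg]
    exact intervalIntegral.integral_neg
  have := h3.symm.trans (h1.trans h2)
  linarith

lemma even_moment (A B : ℝ) (k : ℕ) :
    (∫ θ in (-π)..π, (A * Real.cos θ + B * Real.sin θ) ^ (2*k)) =
      (A^2 + B^2)^k * ((2*π) * (2*k).factorial / (4^k * (k.factorial)^2)) := by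
  rcases eq_or_ne (‖Complex.mk A B‖) 0 with h0 | h0
  · have hA : A = 0 ∧ B = 0 := by
      have := norm_eq_zero.mp h0
      exact ⟨congrArg Complex.re this, congrArg Complex.im this⟩
    obtain ⟨rfl, rfl⟩ := hA
    rcases Nat.eq_zero_or_pos k with rfl | hk
    · simp [cos_even_moment 0]; ring
    · simp only [zero_mul, zero_add, zero_pow (by omega : 2*k ≠ 0), zero_pow hk.ne']
      simp
      left; omega
  · set z : ℂ := Complex.mk A B with hz
    set r := ‖z‖ with hr
    set φ := Complex.arg z with hφ
    have hA : A = r * Real.cos φ := by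
      rw [hr, hφ, Complex.norm_mul_cos_arg]
    have hB : B = r * Real.sin φ := by
      rw [hr, hφ, Complex.norm_mul_sin_arg]
    have key : ∀ θ, A * Real.cos θ + B * Real.sin θ = r * Real.cos (θ - φ) := by
      intro θ; rw [hA, hB, Real.cos_sub]; ring
    simp_rw [key, mul_pow]
    rw [intervalIntegral.integral_const_mul]
    rw [intervalIntegral.integral_comp_sub_right (fun θ => Real.cos θ ^ (2*k)) φ]
    have hper : Function.Periodic (fun θ => Real.cos θ ^ (2*k)) (2*π) := by
      intro x; simp [Real.cos_add_two_pi]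
    have := hper.intervalIntegral_add_eq (-π - φ) (-π)
    rw [show -π - φ + 2*π = π - φ by ring, show -π + 2*π = π by ring] at this
    rw [this, cos_even_moment k]
    have hr2 : r^2 = A^2 + B^2 := by
      rw [hr, Complex.sq_norm, Complex.normSq_apply]; simp [hz]; ring
    rw [← hr2, ← pow_mul]

lemma z_integral (σ μ a b : ℝ) (hσ : 0 < σ) :
    (∫ z in a..b, Real.exp (-((z - μ)^2 / σ^2))) =
      σ * (Real.sqrt π / 2) * (erf ((μ - a)/σ) - erf ((μ - b)/σ)) := by
  have h1 : ∀ z : ℝ, Real.exp (-((z - μ)^2 / σ^2)) = (fun u => Real.exp (-u^2)) ((μ - z)/σ) := by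
    intro z
    have : ((μ - z)/σ)^2 = (z - μ)^2 / σ^2 := by
      rw [div_pow]; ring_nf
    simp only []
    rw [← this]
  simp_rw [h1]
  rw [intervalIntegral.integral_comp_sub_left (fun w => Real.exp (-(w/σ)^2)) μ]
  rw [intervalIntegral.integral_comp_div (fun u => Real.exp (-u^2)) hσ.ne']
  have hint : ∀ c d : ℝ, (∫ u in c..d, Real.exp (-u^2)) =
      (∫ u in (0:ℝ)..d, Real.exp (-u^2)) - ∫ u in (0:ℝ)..c, Real.exp (-u^2) := by
    intro c d
    rw [← intervalIntegral.integral_add_adjacent_intervals (a := c) (b := 0) (c := d)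
      (by exact (Continuous.intervalIntegrable (by continuity) _ _))
      (by exact (Continuous.intervalIntegrable (by continuity) _ _))]
    rw [intervalIntegral.integral_symm]
    ring
  rw [hint]
  have hπ : Real.sqrt π ≠ 0 := by positivity
  simp only [erf, smul_eq_mul]
  field_simp

lemma radial_moment (c S : ℝ) (hc : 0 < c) (k : ℕ) :
    (∫ ρ in (0:ℝ)..S, ρ^(2*k+1) * Real.exp (-(ρ^2/c))) =
      c^(k+1)/2 * lowerGamma (k+1) (S^2/c) := by
  have key := intervalIntegral.integral_comp_smul_deriv (a := (0:ℝ)) (b := S)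
    (f := fun ρ => ρ^2/c) (f' := fun ρ => 2*ρ/c) (g := fun u => u^(k:ℕ) * Real.exp (-u))
    (fun x _ => by
      simpa using ((hasDerivAt_pow 2 x).div_const c))
    (by fun_prop)
    (by fun_prop)
  simp only [Function.comp, smul_eq_mul] at key
  have h0 : ((0:ℝ)^2/c) = 0 := by simp
  rw [h0] at key
  have hlg : lowerGamma (k+1) (S^2/c) = ∫ u in (0:ℝ)..(S^2/c), u^(k:ℕ) * Real.exp (-u) := by
    unfold lowerGamma
    congr 1
    ext u
    rw [show ((k:ℝ)+1-1) = (k:ℝ) by ring, Real.rpow_natCast]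
  rw [hlg, ← key]
  rw [← intervalIntegral.integral_const_mul]
  congr 1
  ext ρ
  have hc' : c ≠ 0 := hc.ne'
  field_simp
  have hck : c ^ k * c⁻¹ ^ k = 1 := by rw [← mul_pow, mul_inv_cancel₀ hc', one_pow]
  linear_combination (-(ρ * ρ ^ (k * 2) * c)) * hck

lemma summable_sq_fact (x : ℝ) (hx : 0 ≤ x) :
    Summable (fun k : ℕ => x^k / ((k.factorial:ℝ))^2) := by
  refine Summable.of_nonneg_of_le (fun k => by positivity) (fun k => ?_)
    (Real.summable_pow_div_factorial x)
  have h1 : (1:ℝ) ≤ (k.factorial:ℝ) := by exact_mod_cast k.factorial_pos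
  have h2 : ((k.factorial:ℝ)) ≤ ((k.factorial:ℝ))^2 := by nlinarith
  have hx' : 0 ≤ x^k := by positivity
  exact div_le_div_of_nonneg_left hx' (by positivity) h2

lemma angular_exp (a A B : ℝ) :
    (∫ θ in Set.Ioo (-π) π, Real.exp (a*(A*Real.cos θ + B*Real.sin θ))) =
      (2*π) * ∑' k:ℕ, (a^2*(A^2+B^2)/4)^k/((k.factorial:ℝ))^2 := by
  set F : ℕ → ℝ → ℝ := fun n θ => (a*(A*Real.cos θ + B*Real.sin θ))^n / n.factorial with hF
  have hexp : ∀ θ : ℝ, Real.exp (a*(A*Real.cos θ + B*Real.sin θ)) = ∑' n : ℕ, F n θ := by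
    intro θ
    rw [Real.exp_eq_exp_ℝ, NormedSpace.exp_eq_tsum_div]
  simp_rw [hexp]
  set M : ℕ → ℝ := fun n => (|a| * (|A| + |B|))^n / n.factorial with hM
  have hs : ∀ θ, |a*(A*Real.cos θ + B*Real.sin θ)| ≤ |a| * (|A| + |B|) := by
    intro θ
    rw [abs_mul]
    refine mul_le_mul_of_nonneg_left ?_ (abs_nonneg a)
    calc |A*Real.cos θ + B*Real.sin θ| ≤ |A*Real.cos θ| + |B*Real.sin θ| := abs_add_le _ _
      _ ≤ |A| + |B| := by
          rw [abs_mul, abs_mul]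
          have := Real.abs_cos_le_one θ
          have := Real.abs_sin_le_one θ
          nlinarith [abs_nonneg A, abs_nonneg B, abs_nonneg (Real.cos θ), abs_nonneg (Real.sin θ)]
  have hbound : ∀ n θ, ‖F n θ‖ ≤ M n := by
    intro n θ
    have he : ‖F n θ‖ = |a*(A*Real.cos θ + B*Real.sin θ)|^n / (n.factorial:ℝ) := by
      simp [hF, abs_pow, Nat.abs_cast, abs_mul]
    rw [he, hM]
    have hfp : (0:ℝ) < n.factorial := by exact_mod_cast n.factorial_pos
    exact (div_le_div_iff_of_pos_right hfp).mpr (pow_le_pow_left₀ (abs_nonneg _) (hs θ) n)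
  have hcont : ∀ n, Continuous (F n) := by
    intro n; fun_prop
  have hvol : volume (Set.Ioo (-π) π) < ⊤ := measure_Ioo_lt_top
  have hInt : ∀ n, IntegrableOn (F n) (Set.Ioo (-π) π) := by
    intro n
    exact ((hcont n).integrableOn_Icc).mono_set Set.Ioo_subset_Icc_self
  have hSum : Summable (fun n => ∫ θ in Set.Ioo (-π) π, ‖F n θ‖) := by
    apply Summable.of_nonneg_of_le
      (fun n => integral_nonneg (fun θ => norm_nonneg _))
      (fun n => ?_)
      (((Real.summable_pow_div_factorial (|a| * (|A| + |B|))).mul_left ((volume (Set.Ioo (-π:ℝ) π)).toReal)))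
    calc (∫ θ in Set.Ioo (-π) π, ‖F n θ‖) ≤ ∫ _θ in Set.Ioo (-π) π, M n := by
          apply integral_mono ((hInt n).norm) _ (fun θ => hbound n θ)
          exact (integrableOn_const_iff).mpr (Or.inr hvol)
      _ = (volume (Set.Ioo (-π:ℝ) π)).toReal * M n := by
          rw [setIntegral_const, smul_eq_mul]; rfl
  rw [← integral_tsum_of_summable_integral_norm hInt hSum]
  have hioc : ∀ n, (∫ θ in Set.Ioo (-π) π, F n θ) = ∫ θ in (-π)..π, F n θ := by
    intro n
    rw [intervalIntegral.integral_of_le (by linarith [Real.pi_pos] : -π ≤ π),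
      ← MeasureTheory.integral_Ioc_eq_integral_Ioo]
  have hval : ∀ n, (∫ θ in Set.Ioo (-π) π, F n θ) =
      a^n / n.factorial * ∫ θ in (-π)..π, (A*Real.cos θ + B*Real.sin θ)^n := by
    intro n
    rw [hioc n]
    rw [← intervalIntegral.integral_const_mul]
    congr 1
    ext θ
    simp only [hF, mul_pow]
    ring
  simp_rw [hval]
  set g : ℕ → ℝ := fun n => a^n / n.factorial * ∫ θ in (-π)..π, (A*Real.cos θ + B*Real.sin θ)^n with hg
  have hgodd : ∀ k, g (2*k+1) = 0 := by
    intro k; simp only [hg, odd_moment, mul_zero]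
  have hgeven : ∀ k, g (2*k) = (2*π) * ((a^2*(A^2+B^2)/4)^k/((k.factorial:ℝ))^2) := by
    intro k
    simp only [hg, even_moment]
    have hpow : (a^2*(A^2+B^2)/4)^k = a^(2*k)*(A^2+B^2)^k/4^k := by
      rw [div_pow, mul_pow, ← pow_mul]
    rw [hpow]
    have hf : ((2*k).factorial : ℝ) ≠ 0 := by positivity
    field_simp
  have h1 : Summable (fun k => g (2*k)) := by
    simp_rw [hgeven]
    exact (summable_sq_fact _ (by positivity)).mul_left _
  have h2 : Summable (fun k => g (2*k+1)) := by
    simp_rw [hgodd]; exact summable_zero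
  have hsplit : (∑' n, g n) = (∑' k, g (2*k)) + ∑' k, g (2*k+1) :=
    (tsum_even_add_odd h1 h2).symm
  rw [hsplit]
  simp_rw [hgodd, hgeven, tsum_zero, add_zero, tsum_mul_left]

lemma disk_integral (c S xi yi : ℝ) (hc : 0 < c) (hS : 0 < S) :
    (∫ q in {q : ℝ × ℝ | q.1^2 + q.2^2 ≤ S^2},
        Real.exp (-(((q.1-xi)^2 + (q.2-yi)^2)/c))) =
      π * c * Real.exp (-((xi^2+yi^2)/c)) *
        ∑' k:ℕ, ((xi^2+yi^2)/c)^k/((k.factorial:ℝ))^2 * lowerGamma (k+1) (S^2/c) := by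
  set r2 := xi^2 + yi^2 with hr2
  set f : ℝ × ℝ → ℝ := fun q => Real.exp (-(((q.1-xi)^2 + (q.2-yi)^2)/c)) with hf
  have hmeas : MeasurableSet {q : ℝ × ℝ | q.1^2 + q.2^2 ≤ S^2} := by
    apply measurableSet_le <;> fun_prop
  -- step 1: indicator
  rw [← MeasureTheory.integral_indicator hmeas]
  -- step 2: polar coordinates
  rw [← integral_comp_polarCoord_symm]
  -- now integral over polarCoord.target of p.1 • indicator ... (polarCoord.symm p)
  set H : ℝ × ℝ → ℝ := fun p =>
    p.1 * Real.exp (-(((p.1*Real.cos p.2 - xi)^2 + (p.1*Real.sin p.2 - yi)^2)/c)) with hH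
  have htarget : polarCoord.target = Set.Ioi (0:ℝ) ×ˢ Set.Ioo (-π) π := rfl
  have hsymm : ∀ p : ℝ × ℝ, polarCoord.symm p = (p.1 * Real.cos p.2, p.1 * Real.sin p.2) :=
    fun p => rfl
  have hstep : (∫ p in polarCoord.target,
        p.1 • Set.indicator {q : ℝ × ℝ | q.1^2 + q.2^2 ≤ S^2} f (polarCoord.symm p)) =
      ∫ p in Set.Ioc (0:ℝ) S ×ˢ Set.Ioo (-π) π, H p := by
    rw [htarget]
    have hcongr : ∀ p ∈ Set.Ioi (0:ℝ) ×ˢ Set.Ioo (-π) π,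
        p.1 • Set.indicator {q : ℝ × ℝ | q.1^2 + q.2^2 ≤ S^2} f (polarCoord.symm p) =
        Set.indicator {q : ℝ × ℝ | q.1 ≤ S} H p := by
      rintro ⟨ρ, θ⟩ ⟨hρ, hθ⟩
      simp only [Set.mem_Ioi] at hρ
      have hcond : ((ρ*Real.cos θ)^2 + (ρ*Real.sin θ)^2 ≤ S^2) ↔ ρ ≤ S := by
        have : (ρ*Real.cos θ)^2 + (ρ*Real.sin θ)^2 = ρ^2 := by
          have := Real.sin_sq_add_cos_sq θ
          nlinarith [this]
        rw [this]
        constructor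
        · intro h; nlinarith
        · intro h; nlinarith
      by_cases hle : ρ ≤ S
      · rw [Set.indicator_of_mem (by simpa [hsymm] using hcond.mpr hle),
          Set.indicator_of_mem (by exact hle)]
        simp [hH, hf, hsymm, smul_eq_mul]
      · rw [Set.indicator_of_notMem (by simpa [hsymm, hcond] using hle),
          Set.indicator_of_notMem (by exact hle)]
        simp
    rw [setIntegral_congr_fun (by measurability) hcongr]
    rw [setIntegral_indicator (by apply measurableSet_le <;> fun_prop)]
    have hseteq : (Set.Ioi (0:ℝ) ×ˢ Set.Ioo (-π) π) ∩ {q : ℝ × ℝ | q.1 ≤ S}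
        = Set.Ioc (0:ℝ) S ×ˢ Set.Ioo (-π) π := by
      ext ⟨ρ, θ⟩
      simp only [Set.mem_inter_iff, Set.mem_prod, Set.mem_Ioi, Set.mem_Ioo, Set.mem_Ioc,
        Set.mem_setOf_eq]
      tauto
    rw [hseteq]
  rw [hstep]
  -- step 6: Fubini
  have hHcont : Continuous H := by fun_prop
  have hIntH : IntegrableOn H (Set.Ioc (0:ℝ) S ×ˢ Set.Ioo (-π) π) := by
    apply (hHcont.continuousOn.integrableOn_compact ((isCompact_Icc).prod (isCompact_Icc))).mono_set
    exact Set.prod_mono Set.Ioc_subset_Icc_self Set.Ioo_subset_Icc_self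
  have hIntH' : IntegrableOn H (Set.Ioc (0:ℝ) S ×ˢ Set.Ioo (-π) π)
      ((volume : Measure ℝ).prod volume) := by rwa [← Measure.volume_eq_prod]
  rw [Measure.volume_eq_prod, setIntegral_prod _ hIntH']
  -- step 7: inner integral
  have hinner : ∀ ρ ∈ Set.Ioc (0:ℝ) S, (∫ θ in Set.Ioo (-π) π, H (ρ, θ)) =
      2*π * (ρ * Real.exp (-((ρ^2 + r2)/c))) * ∑' k:ℕ, (ρ^2*r2/c^2)^k/((k.factorial:ℝ))^2 := by
    intro ρ _
    have hsplit : ∀ θ : ℝ, H (ρ, θ) =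
        (ρ * Real.exp (-((ρ^2 + r2)/c))) * Real.exp ((2*ρ/c)*(xi*Real.cos θ + yi*Real.sin θ)) := by
      intro θ
      simp only [hH, hr2]
      rw [mul_assoc, ← Real.exp_add]
      congr 2
      have hpyth := Real.sin_sq_add_cos_sq θ
      have hcne : c ≠ 0 := hc.ne'
      field_simp
      linear_combination (-(ρ^2)) * hpyth
    simp_rw [hsplit]
    rw [MeasureTheory.integral_const_mul, angular_exp (2*ρ/c) xi yi]
    have hbase : ((2*ρ/c)^2*(xi^2+yi^2)/4) = ρ^2*r2/c^2 := by
      rw [hr2]; field_simp; ring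
    rw [hbase]
    ring
  rw [setIntegral_congr_fun measurableSet_Ioc hinner]
  -- step 8: outer integral, interchange sum
  have hout : ∀ ρ : ℝ, 2*π * (ρ * Real.exp (-((ρ^2 + r2)/c))) * (∑' k:ℕ, (ρ^2*r2/c^2)^k/((k.factorial:ℝ))^2)
      = ∑' k:ℕ, (2*π * Real.exp (-(r2/c))) * ((r2/c^2)^k/((k.factorial:ℝ))^2) * (ρ^(2*k+1) * Real.exp (-(ρ^2/c))) := by
    intro ρ
    rw [← tsum_mul_left]
    congr 1
    ext k
    have hcne : c ≠ 0 := hc.ne'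
    have h1 : (ρ^2*r2/c^2)^k = ρ^(2*k) * (r2/c^2)^k := by
      rw [mul_div_assoc, mul_pow, pow_mul]
    rw [h1, show -((ρ^2+r2)/c) = -(r2/c) + -(ρ^2/c) by field_simp; ring, Real.exp_add]
    ring
  simp_rw [hout]
  set G : ℕ → ℝ → ℝ := fun k ρ =>
    (2*π * Real.exp (-(r2/c))) * ((r2/c^2)^k/((k.factorial:ℝ))^2) * (ρ^(2*k+1) * Real.exp (-(ρ^2/c))) with hG
  have hr2nn : 0 ≤ r2 := by rw [hr2]; positivity
  have hGint : ∀ k, IntegrableOn (G k) (Set.Ioc (0:ℝ) S) := by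
    intro k
    exact ((Continuous.continuousOn (by fun_prop)).integrableOn_compact
      isCompact_Icc).mono_set Set.Ioc_subset_Icc_self
  have hGsum : Summable fun k => ∫ ρ in Set.Ioc (0:ℝ) S, ‖G k ρ‖ := by
    set C : ℕ → ℝ := fun k => (2*π * Real.exp (-(r2/c))) * ((r2/c^2)^k/((k.factorial:ℝ))^2) * (S^(2*k+1)) with hC
    have hle : ∀ k, (∫ ρ in Set.Ioc (0:ℝ) S, ‖G k ρ‖) ≤ (volume (Set.Ioc (0:ℝ) S)).toReal * C k := by
      intro k
      calc (∫ ρ in Set.Ioc (0:ℝ) S, ‖G k ρ‖) ≤ ∫ _ρ in Set.Ioc (0:ℝ) S, C k := by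
            apply setIntegral_mono_on ((hGint k).norm)
              ((integrableOn_const_iff).mpr (Or.inr measure_Ioc_lt_top)) measurableSet_Ioc
            intro ρ hρ
            obtain ⟨h0, hle⟩ := hρ
            have hGnn : 0 ≤ G k ρ := by
              simp only [hG]; positivity
            rw [Real.norm_of_nonneg hGnn]
            simp only [hG, hC]
            have h1 : ρ^(2*k+1) * Real.exp (-(ρ^2/c)) ≤ S^(2*k+1) := by
              calc ρ^(2*k+1) * Real.exp (-(ρ^2/c)) ≤ ρ^(2*k+1) * 1 := by
                    apply mul_le_mul_of_nonneg_left _ (pow_nonneg h0.le _)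
                    apply Real.exp_le_one_iff.mpr
                    have : 0 ≤ ρ^2/c := by positivity
                    linarith
                _ = ρ^(2*k+1) := mul_one _
                _ ≤ S^(2*k+1) := pow_le_pow_left₀ h0.le hle _
            apply mul_le_mul_of_nonneg_left h1 (by positivity)
        _ = (volume (Set.Ioc (0:ℝ) S)).toReal * C k := by
            rw [setIntegral_const, smul_eq_mul]; rfl
    have hsum : Summable fun k => (volume (Set.Ioc (0:ℝ) S)).toReal * C k := by
      apply Summable.mul_left
      simp only [hC]
      have : ∀ k : ℕ, (2*π * Real.exp (-(r2/c))) * ((r2/c^2)^k/((k.factorial:ℝ))^2) * (S^(2*k+1))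
          = (2*π * Real.exp (-(r2/c)) * S) * ((r2*S^2/c^2)^k/((k.factorial:ℝ))^2) := by
        intro k
        rw [show r2*S^2/c^2 = (r2/c^2)*(S^2) by ring, mul_pow, ← pow_mul]
        ring
      simp_rw [this]
      exact (summable_sq_fact _ (by positivity)).mul_left _
    exact Summable.of_nonneg_of_le (fun k => integral_nonneg (fun ρ => norm_nonneg _)) hle hsum
  rw [← integral_tsum_of_summable_integral_norm hGint hGsum]
  -- step 9: evaluate each integral
  have hek : ∀ k : ℕ, (∫ ρ in Set.Ioc (0:ℝ) S, G k ρ) =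
      π * c * Real.exp (-(r2/c)) * ((r2/c)^k/((k.factorial:ℝ))^2 * lowerGamma (k+1) (S^2/c)) := by
    intro k
    simp only [hG]
    rw [MeasureTheory.integral_const_mul, ← intervalIntegral.integral_of_le hS.le,
      radial_moment c S hc k]
    have hcne : c ≠ 0 := hc.ne'
    have h2 : (r2/c^2)^k * c^(k+1) = (r2/c)^k * c := by
      rw [div_pow, div_pow]
      field_simp
      ring
    linear_combination (π * Real.exp (-(r2/c)) * lowerGamma ((k:ℝ)+1) (S^2/c)
      / ((k.factorial:ℝ))^2) * h2
  simp_rw [hek]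
  rw [tsum_mul_left]

/-- Proposition 1 of the paper: the channel impulse response of a cylindrical transparent
receiver for a point release at `(xi, yi, zTX)` with diffusion `D` and drift `v`. -/
theorem cylinder_integral_gaussian (D v t S zTX zS zE xi yi : ℝ)
    (hD : 0 < D) (ht : 0 < t) (hS : 0 < S) (hz : zS < zE) :
    (∫ p in {p : ℝ × ℝ × ℝ | p.1^2 + p.2.1^2 ≤ S^2 ∧ p.2.2 ∈ Set.Icc zS zE},
        (4*π*D*t) ^ (-(3:ℝ)/2) *
          Real.exp (-(((p.1 - xi)^2 + (p.2.1 - yi)^2 + (p.2.2 - zTX - v*t)^2) / (4*D*t)))) =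
      (1/2) * (erf ((zTX + v*t - zS) / Real.sqrt (4*D*t))
              - erf ((zTX + v*t - zE) / Real.sqrt (4*D*t)))
        * Real.exp (-((xi^2 + yi^2) / (4*D*t)))
        * ∑' k : ℕ, ((xi^2 + yi^2) / (4*D*t))^k / ((Nat.factorial k : ℝ))^2
            * lowerGamma (k+1) (S^2 / (4*D*t)) := by
  set c : ℝ := 4*D*t with hcdef
  have hc : 0 < c := by positivity
  set K : ℝ := (4*π*D*t) ^ (-(3:ℝ)/2) with hK
  set A : ℝ × ℝ → ℝ := Set.indicator {q : ℝ × ℝ | q.1^2 + q.2^2 ≤ S^2}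
    (fun q => Real.exp (-(((q.1-xi)^2 + (q.2-yi)^2)/c))) with hA
  set B : ℝ → ℝ := Set.indicator (Set.Icc zS zE)
    (fun z => Real.exp (-((z - (zTX + v*t))^2 / c))) with hB
  have hmeas : MeasurableSet {p : ℝ × ℝ × ℝ | p.1^2 + p.2.1^2 ≤ S^2 ∧ p.2.2 ∈ Set.Icc zS zE} := by
    have h1 : MeasurableSet {p : ℝ × ℝ × ℝ | p.1^2 + p.2.1^2 ≤ S^2} :=
      measurableSet_le (by fun_prop) (by fun_prop)
    have h2 : MeasurableSet {p : ℝ × ℝ × ℝ | p.2.2 ∈ Set.Icc zS zE} :=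
      measurableSet_Icc.preimage (by fun_prop)
    exact h1.inter h2
  rw [← MeasureTheory.integral_indicator hmeas]
  have hfac : ∀ p : ℝ × ℝ × ℝ,
      Set.indicator {p : ℝ × ℝ × ℝ | p.1^2 + p.2.1^2 ≤ S^2 ∧ p.2.2 ∈ Set.Icc zS zE}
        (fun p => K * Real.exp (-(((p.1 - xi)^2 + (p.2.1 - yi)^2 + (p.2.2 - zTX - v*t)^2) / c))) p
      = K * (A (p.1, p.2.1) * B p.2.2) := by
    intro p
    by_cases h1 : p.1^2 + p.2.1^2 ≤ S^2 <;> by_cases h2 : p.2.2 ∈ Set.Icc zS zE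
    · rw [Set.indicator_of_mem (by exact ⟨h1, h2⟩), hA, hB,
        Set.indicator_of_mem (show (p.1, p.2.1) ∈ {q : ℝ × ℝ | q.1^2 + q.2^2 ≤ S^2} from h1),
        Set.indicator_of_mem h2, ← Real.exp_add]
      congr 1
      have : p.2.2 - zTX - v*t = p.2.2 - (zTX + v*t) := by ring
      rw [this]
      field_simp
      ring
    · rw [Set.indicator_of_notMem (fun h => h2 h.2), hB, Set.indicator_of_notMem h2]
      simp
    · rw [Set.indicator_of_notMem (fun h => h1 h.1), hA,
        Set.indicator_of_notMem (show (p.1, p.2.1) ∉ {q : ℝ × ℝ | q.1^2 + q.2^2 ≤ S^2} from h1)]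
      simp
    · rw [Set.indicator_of_notMem (fun h => h1 h.1), hA,
        Set.indicator_of_notMem (show (p.1, p.2.1) ∉ {q : ℝ × ℝ | q.1^2 + q.2^2 ≤ S^2} from h1)]
      simp
  simp_rw [hfac]
  have hassoc : (∫ p : ℝ × ℝ × ℝ, K * (A (p.1, p.2.1) * B p.2.2)) =
      ∫ q : (ℝ × ℝ) × ℝ, K * (A q.1 * B q.2) := by
    rw [← MeasureTheory.volume_preserving_prodAssoc.integral_comp
      (MeasurableEquiv.prodAssoc).measurableEmbedding
      (fun p : ℝ × ℝ × ℝ => K * (A (p.1, p.2.1) * B p.2.2))]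
    rfl
  rw [hassoc]
  have hprod : (∫ q : (ℝ × ℝ) × ℝ, K * (A q.1 * B q.2)) = K * ((∫ q : ℝ × ℝ, A q) * ∫ z : ℝ, B z) := by
    rw [MeasureTheory.integral_const_mul, Measure.volume_eq_prod, integral_prod_mul]
  rw [hprod]
  -- evaluate A integral
  have hAint : (∫ q : ℝ × ℝ, A q) =
      π * c * Real.exp (-((xi^2+yi^2)/c)) *
        ∑' k:ℕ, ((xi^2+yi^2)/c)^k/((k.factorial:ℝ))^2 * lowerGamma (k+1) (S^2/c) := by
    rw [hA, MeasureTheory.integral_indicator (by apply measurableSet_le <;> fun_prop)]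
    exact disk_integral c S xi yi hc hS
  -- evaluate B integral
  have hσ : (0:ℝ) < Real.sqrt c := Real.sqrt_pos.mpr hc
  have hBint : (∫ z : ℝ, B z) =
      Real.sqrt c * (Real.sqrt π / 2) *
        (erf ((zTX + v*t - zS)/Real.sqrt c) - erf ((zTX + v*t - zE)/Real.sqrt c)) := by
    rw [hB, MeasureTheory.integral_indicator measurableSet_Icc,
      MeasureTheory.integral_Icc_eq_integral_Ioc, ← intervalIntegral.integral_of_le hz.le]
    have : ∀ z : ℝ, Real.exp (-((z - (zTX + v*t))^2 / c)) =
        Real.exp (-((z - (zTX + v*t))^2 / (Real.sqrt c)^2)) := by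
      intro z
      rw [Real.sq_sqrt hc.le]
    simp_rw [this]
    exact z_integral (Real.sqrt c) (zTX + v*t) zS zE hσ
  rw [hAint, hBint]
  -- scalar algebra
  have hX : (0:ℝ) < π * c := by positivity
  have hKval : K * (π * c * (Real.sqrt c * Real.sqrt π)) = 1 := by
    have h1 : Real.sqrt c * Real.sqrt π = Real.sqrt (π * c) := by
      rw [mul_comm, ← Real.sqrt_mul pi_pos.le]
    have h2 : (4*π*D*t) = π * c := by rw [hcdef]; ring
    have h3 : Real.sqrt (π*c) = (π*c) ^ ((1:ℝ)/2) := Real.sqrt_eq_rpow _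
    rw [h1, h3, hK, h2]
    have e : (π*c) ^ (-(3:ℝ)/2) * ((π*c) * (π*c)^((1:ℝ)/2)) = (π*c) ^ (-(3:ℝ)/2 + (1 + 1/2)) := by
      rw [Real.rpow_add hX, Real.rpow_add hX, Real.rpow_one]
    rw [e, show (-(3:ℝ)/2 + (1 + 1/2)) = 0 by norm_num, Real.rpow_zero]
  linear_combination (Real.exp (-((xi^2 + yi^2)/c))
      * (∑' k : ℕ, ((xi^2 + yi^2)/c)^k / ((Nat.factorial k : ℝ))^2 * lowerGamma (k+1) (S^2/c))
      * (erf ((zTX + v*t - zS)/Real.sqrt c) - erf ((zTX + v*t - zE)/Real.sqrt c)) / 2) * hKval
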